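/- Assume additionally that ρ (N−1) ≤ 2 · ρ 0. Then every eigenvalue λ of the real symmetric matrix A satisfies λ ≥ δρ⋆ / 4; in particular the smallest eigenvalue λ_N of A is at least δρ⋆ / 4. -/

import Mathlib

open Matrix Finset

private lemma telescope_sum (ρ : ℕ → ℝ) (m : ℕ) :
    ∑ k ∈ Finset.range (m + 1), (if k = 0 then ρ 0 else ρ k - ρ (k - 1)) = ρ m := by
  induction m with
  | zero => simp
  | succ m ih => rw [Finset.sum_range_succ, ih]; simp

private lemma quad_form_identity (N : ℕ) (ρ : ℕ → ℝ) (y : ℕ → ℝ) :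
    ∑ i ∈ Finset.range N, ∑ j ∈ Finset.range N, ρ (min i j) * y i * y j
      = ∑ k ∈ Finset.range N,
          (if k = 0 then ρ 0 else ρ k - ρ (k - 1)) * (∑ i ∈ Finset.Ico k N, y i) ^ 2 := by
  set c : ℕ → ℝ := fun k => if k = 0 then ρ 0 else ρ k - ρ (k - 1) with hc
  have hrw : ∀ i ∈ Finset.range N, ∀ j ∈ Finset.range N,
      ρ (min i j) * y i * y j
        = ∑ k ∈ Finset.range N, (if k ≤ i then y i else 0) * ((if k ≤ j then y j else 0) * c k) := by
    intro i hi j hj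
    rw [Finset.mem_range] at hi hj
    have h1 : ρ (min i j) = ∑ k ∈ Finset.range N, if k ≤ min i j then c k else 0 := by
      rw [← Finset.sum_filter]
      have : (Finset.range N).filter (· ≤ min i j) = Finset.range (min i j + 1) := by
        ext k; simp only [Finset.mem_filter, Finset.mem_range]; omega
      rw [this, telescope_sum]
    rw [h1, Finset.sum_mul, Finset.sum_mul]
    apply Finset.sum_congr rfl
    intro k _
    by_cases h : k ≤ i <;> by_cases h' : k ≤ j <;>
      simp [le_min_iff, h, h'] <;> ring
  rw [Finset.sum_congr rfl (fun i hi => Finset.sum_congr rfl (hrw i hi))]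
  rw [Finset.sum_congr rfl (fun i _ => Finset.sum_comm), Finset.sum_comm]
  apply Finset.sum_congr rfl
  intro k _
  have hS : ∑ i ∈ Finset.range N, (if k ≤ i then y i else 0) = ∑ i ∈ Finset.Ico k N, y i := by
    rw [← Finset.sum_filter]
    congr 1
    ext i; simp only [Finset.mem_filter, Finset.mem_range, Finset.mem_Ico]; omega
  simp only [← Finset.sum_mul, ← Finset.mul_sum, hS]
  ring

private lemma quad_form_lower (N : ℕ) (hN : 2 ≤ N) (ρ : ℕ → ℝ)
    (hρ : ∀ i j, i < j → j < N → ρ i < ρ j) (hρ0 : 0 < ρ 0)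
    (hρN : ρ (N - 1) ≤ 2 * ρ 0) (δ : ℝ)
    (hδ : δ = Finset.inf' (Finset.range (N - 1))
        ⟨0, Finset.mem_range.mpr (Nat.sub_pos_of_lt (by omega))⟩ (fun i => ρ (i + 1) - ρ i))
    (y : ℕ → ℝ) :
    δ / 4 * (∑ i ∈ Finset.range N, (y i) ^ 2)
      ≤ ∑ i ∈ Finset.range N, ∑ j ∈ Finset.range N, ρ (min i j) * y i * y j := by
  have hne : (Finset.range (N - 1)).Nonempty := ⟨0, Finset.mem_range.mpr (by omega)⟩
  have hδpos : 0 < δ := by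
    rw [hδ]
    refine (Finset.lt_inf'_iff _).2 ?_
    intro i hi
    rw [Finset.mem_range] at hi
    have := hρ i (i + 1) (by omega) (by omega)
    linarith
  set c : ℕ → ℝ := fun k => if k = 0 then ρ 0 else ρ k - ρ (k - 1) with hc
  set S : ℕ → ℝ := fun k => ∑ i ∈ Finset.Ico k N, y i with hSdef
  have hδc : ∀ k < N, δ ≤ c k := by
    intro k hk
    rcases Nat.eq_zero_or_pos k with rfl | hkpos
    · have h01 : δ ≤ ρ 1 - ρ 0 := by
        rw [hδ]
        exact Finset.inf'_le _ (Finset.mem_range.mpr (by omega))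
      have h1N : ρ 1 ≤ ρ (N - 1) := by
        rcases Nat.lt_or_ge 1 (N - 1) with h | h
        · exact (hρ 1 (N - 1) h (by omega)).le
        · have : N - 1 = 1 := by omega
          rw [this]
      simp only [c, if_pos rfl]
      linarith
    · have : δ ≤ ρ (k - 1 + 1) - ρ (k - 1) := by
        rw [hδ]
        exact Finset.inf'_le _ (Finset.mem_range.mpr (by omega))
      have hk1 : k - 1 + 1 = k := by omega
      rw [hk1] at this
      simp only [c, if_neg (by omega : ¬ k = 0)]
      exact this
  rw [quad_form_identity]
  have step1 : δ * ∑ k ∈ Finset.range N, (S k) ^ 2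
      ≤ ∑ k ∈ Finset.range N, c k * (S k) ^ 2 := by
    rw [Finset.mul_sum]
    apply Finset.sum_le_sum
    intro k hk
    rw [Finset.mem_range] at hk
    exact mul_le_mul_of_nonneg_right (hδc k hk) (sq_nonneg _)
  have hSN : S N = 0 := by simp [S]
  have step2 : ∑ i ∈ Finset.range N, (y i) ^ 2 ≤ 4 * ∑ k ∈ Finset.range N, (S k) ^ 2 := by
    have hy : ∀ k < N, y k = S k - S (k + 1) := by
      intro k hk
      simp only [S]
      rw [Finset.sum_eq_sum_Ico_succ_bot hk]
      ring
    have hbd : ∀ k ∈ Finset.range N, (y k) ^ 2 ≤ 2 * (S k) ^ 2 + 2 * (S (k + 1)) ^ 2 := by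
      intro k hk
      rw [Finset.mem_range] at hk
      rw [hy k hk]
      nlinarith [sq_nonneg (S k + S (k + 1))]
    calc ∑ i ∈ Finset.range N, (y i) ^ 2
        ≤ ∑ k ∈ Finset.range N, (2 * (S k) ^ 2 + 2 * (S (k + 1)) ^ 2) :=
          Finset.sum_le_sum hbd
      _ = 2 * (∑ k ∈ Finset.range N, (S k) ^ 2)
          + 2 * (∑ k ∈ Finset.range N, (S (k + 1)) ^ 2) := by
          rw [Finset.sum_add_distrib, ← Finset.mul_sum, ← Finset.mul_sum]
      _ ≤ 4 * ∑ k ∈ Finset.range N, (S k) ^ 2 := by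
          have hshift : ∑ k ∈ Finset.range N, (S (k + 1)) ^ 2
              = ∑ k ∈ Finset.range (N + 1), (S k) ^ 2 - (S 0) ^ 2 := by
            rw [Finset.sum_range_succ' (fun k => (S k) ^ 2) N]; ring
          have : ∑ k ∈ Finset.range (N + 1), (S k) ^ 2
              = ∑ k ∈ Finset.range N, (S k) ^ 2 := by
            rw [Finset.sum_range_succ, hSN]; ring
          rw [hshift, this]
          nlinarith [sq_nonneg (S 0)]
  calc δ / 4 * (∑ i ∈ Finset.range N, (y i) ^ 2)
      ≤ δ / 4 * (4 * ∑ k ∈ Finset.range N, (S k) ^ 2) := by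
        apply mul_le_mul_of_nonneg_left step2 (by linarith)
    _ = δ * ∑ k ∈ Finset.range N, (S k) ^ 2 := by ring
    _ ≤ ∑ k ∈ Finset.range N, c k * (S k) ^ 2 := step1

/-- If `ρ (N-1) ≤ 2 ρ 0`, every eigenvalue of the layer-coupling matrix `A`
is at least `δρ⋆ / 4`, where `δρ⋆` is the minimal adjacent density gap; in
particular the smallest eigenvalue is at least `δρ⋆ / 4`. -/
theorem layer_coupling_min_eigenvalue_lower_bound
    (N : ℕ) (hN : 2 ≤ N) (ρ : ℕ → ℝ)
    (hρ : ∀ i j, i < j → j < N → ρ i < ρ j) (hρ0 : 0 < ρ 0)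
    (hρN : ρ (N - 1) ≤ 2 * ρ 0)
    (A : Matrix (Fin N) (Fin N) ℝ)
    (hA : ∀ i j : Fin N, A i j = ρ (min i.val j.val))
    (hHerm : A.IsHermitian)
    (δ : ℝ)
    (hδ : δ = Finset.inf' (Finset.range (N - 1))
        ⟨0, Finset.mem_range.mpr (by omega)⟩ (fun i => ρ (i + 1) - ρ i)) :
    (∀ i : Fin N, δ / 4 ≤ hHerm.eigenvalues i) ∧
    δ / 4 ≤ Finset.univ.inf' ⟨⟨0, by omega⟩, Finset.mem_univ _⟩ hHerm.eigenvalues := by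
  have main : ∀ i : Fin N, δ / 4 ≤ hHerm.eigenvalues i := by
    intro i
    set v : EuclideanSpace ℝ (Fin N) := hHerm.eigenvectorBasis i with hv
    -- quadratic form lower bound applied to v (extended to ℕ)
    set y : ℕ → ℝ := fun k => if h : k < N then v ⟨k, h⟩ else 0 with hy
    have hyv : ∀ j : Fin N, y j.val = v j := by
      intro j; simp [y, j.isLt]
    have hdot : dotProduct (star ⇑v) (A *ᵥ ⇑v)
        = ∑ a ∈ Finset.range N, ∑ b ∈ Finset.range N, ρ (min a b) * y a * y b := by
      simp only [dotProduct, Matrix.mulVec, dotProduct, Pi.star_apply,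
        star_trivial]
      have inner_eq : ∀ a : Fin N,
          v a * ∑ j : Fin N, A a j * v j
            = ∑ b ∈ Finset.range N, ρ (min a.val b) * y a.val * y b := by
        intro a
        rw [Finset.mul_sum]
        rw [← Fin.sum_univ_eq_sum_range (fun b => ρ (min a.val b) * y a.val * y b) N]
        apply Finset.sum_congr rfl
        intro b _
        rw [hA, hyv, hyv]
        ring
      rw [← Fin.sum_univ_eq_sum_range
        (fun a => ∑ b ∈ Finset.range N, ρ (min a b) * y a * y b) N]
      apply Finset.sum_congr rfl
      intro a _
      exact inner_eq a
    have hnorm : ∑ a ∈ Finset.range N, (y a) ^ 2 = 1 := by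
      have h1 : ‖v‖ = 1 := hHerm.eigenvectorBasis.orthonormal.1 i
      rw [EuclideanSpace.norm_eq] at h1
      have h2 : ∑ j : Fin N, ‖v j‖ ^ 2 = 1 := by
        have hnn : (0:ℝ) ≤ ∑ j : Fin N, ‖v j‖ ^ 2 :=
          Finset.sum_nonneg fun j _ => sq_nonneg _
        nlinarith [Real.sq_sqrt hnn, h1]
      rw [← Fin.sum_univ_eq_sum_range (fun a => (y a) ^ 2) N]
      calc ∑ a : Fin N, (y a.val) ^ 2 = ∑ a : Fin N, ‖v a‖ ^ 2 := by
            apply Finset.sum_congr rfl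
            intro a _
            rw [hyv, Real.norm_eq_abs, sq_abs]
        _ = 1 := h2
    have hbound := quad_form_lower N hN ρ hρ hρ0 hρN δ hδ y
    rw [hnorm, mul_one] at hbound
    have heig : hHerm.eigenvalues i
        = dotProduct (star ⇑v) (A *ᵥ ⇑v) := by
      have := hHerm.eigenvalues_eq i
      simpa using this
    rw [heig, hdot]
    exact hbound
  refine ⟨main, ?_⟩
  apply Finset.le_inf'
  intro i _
  exact main i
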